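/- Let G be a compact topological group with Haar probability measure λ. For all Borel sets A, B ⊆ G, the function y ↦ λ(B ∩ (A · y)) from G to ℝ is continuous, where A · y = {a · y : a ∈ A}. -/

import Mathlib

open MeasureTheory Filter Set
open scoped symmDiff Topology

/-- On a compact group, a Haar probability measure is also right invariant. -/
lemma haar_right_invariant {G : Type*} [Group G] [TopologicalSpace G] [IsTopologicalGroup G]
    [CompactSpace G] [T2Space G] [MeasurableSpace G] [BorelSpace G]
    (μ : Measure G) [μ.IsHaarMeasure] [IsProbabilityMeasure μ] :
    μ.IsMulRightInvariant := by
  constructor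
  intro g
  set ν := Measure.map (· * g) μ with hν
  have hm : Measurable (· * g) := measurable_mul_const g
  haveI : IsProbabilityMeasure ν := Measure.isProbabilityMeasure_map hm.aemeasurable
  haveI : ν.IsMulLeftInvariant := by
    constructor
    intro a
    rw [hν, Measure.map_map (measurable_const_mul a) hm]
    have h : ((a * ·) ∘ (· * g)) = ((· * g) ∘ (a * ·)) := by
      ext x; simp [mul_assoc]
    rw [h, ← Measure.map_map hm (measurable_const_mul a), map_mul_left_eq_self μ a]
  haveI : ν.IsOpenPosMeasure := by
    constructor
    intro U hU hUne
    rw [hν, Measure.map_apply hm hU.measurableSet]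
    apply (hU.preimage (continuous_mul_right g)).measure_ne_zero μ
    obtain ⟨u, hu⟩ := hUne
    exact ⟨u * g⁻¹, by simp [hu]⟩
  haveI : ν.IsHaarMeasure := ⟨⟩
  exact (μ.isHaarMeasure_eq_of_isProbabilityMeasure ν).symm

lemma inter_toReal_diff_le {G : Type*} [MeasurableSpace G] (μ : Measure G)
    [IsProbabilityMeasure μ] (B S T : Set G) :
    (μ (B ∩ S)).toReal ≤ (μ (B ∩ T)).toReal + (μ (S ∆ T)).toReal := by
  have hsub : B ∩ S ⊆ (B ∩ T) ∪ (S ∆ T) := by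
    intro x hx
    by_cases hxT : x ∈ T
    · exact Or.inl ⟨hx.1, hxT⟩
    · exact Or.inr (Or.inl ⟨hx.2, hxT⟩)
  calc (μ (B ∩ S)).toReal ≤ (μ ((B ∩ T) ∪ (S ∆ T))).toReal := by
        apply ENNReal.toReal_mono (measure_ne_top _ _) (measure_mono hsub)
    _ ≤ (μ (B ∩ T)).toReal + (μ (S ∆ T)).toReal := by
        rw [← ENNReal.toReal_add (measure_ne_top _ _) (measure_ne_top _ _)]
        exact ENNReal.toReal_mono (by finiteness) (measure_union_le _ _)

/-- For a compact group `G` with Haar probability measure `μ` and Borel sets `A, B ⊆ G`,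
the map `y ↦ μ (B ∩ (A * y))` is continuous. -/
theorem stmt1 {G : Type*} [Group G] [TopologicalSpace G] [IsTopologicalGroup G]
    [CompactSpace G] [T2Space G] [MeasurableSpace G] [BorelSpace G]
    (μ : Measure G) [μ.IsHaarMeasure] [IsProbabilityMeasure μ]
    (A B : Set G) (hA : MeasurableSet A) (hB : MeasurableSet B) :
    Continuous (fun y : G => (μ (B ∩ ((· * y) '' A))).toReal) := by
  haveI : μ.IsMulRightInvariant := haar_right_invariant μ
  -- express the image as a preimage
  have himg : ∀ y : G, ((· * y) '' A) = (fun x => x * y⁻¹) ⁻¹' A := by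
    intro y
    ext x
    constructor
    · rintro ⟨a, ha, rfl⟩; simpa using ha
    · intro hx; exact ⟨x * y⁻¹, hx, by simp⟩
  -- the family of right translations as a continuous family of continuous maps
  let F : C(G, C(G, G)) := ContinuousMap.curry ⟨fun p : G × G => p.2 * p.1⁻¹, by continuity⟩
  have hFapp : ∀ y x : G, F y x = x * y⁻¹ := fun y x => rfl
  rw [continuous_iff_continuousAt]
  intro y₀
  have htend : Tendsto (fun y => μ ((F y ⁻¹' A) ∆ (F y₀ ⁻¹' A))) (𝓝 y₀) (𝓝 0) := by
    refine tendsto_measure_symmDiff_preimage_nhds_zero (μ := μ) (ν := μ) (F.continuous.tendsto y₀)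
      (Eventually.of_forall fun y => ?_) ?_ hA.nullMeasurableSet (measure_ne_top _ _)
    · exact measurePreserving_mul_right μ y⁻¹
    · exact measurePreserving_mul_right μ y₀⁻¹
  have htendR : Tendsto (fun y => (μ ((F y ⁻¹' A) ∆ (F y₀ ⁻¹' A))).toReal) (𝓝 y₀) (𝓝 0) := by
    have := (ENNReal.tendsto_toReal ENNReal.zero_ne_top).comp htend; rw [ENNReal.toReal_zero] at this; exact this
  rw [ContinuousAt, tendsto_iff_dist_tendsto_zero]
  apply squeeze_zero (fun y => dist_nonneg) _ htendR
  intro y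
  rw [Real.dist_eq, abs_sub_le_iff]
  have h1 := inter_toReal_diff_le μ B (F y ⁻¹' A) (F y₀ ⁻¹' A)
  have h2 := inter_toReal_diff_le μ B (F y₀ ⁻¹' A) (F y ⁻¹' A)
  rw [symmDiff_comm] at h2
  have hpre : ∀ z : G, ((· * z) '' A) = F z ⁻¹' A := by
    intro z
    rw [himg z]
    rfl
  constructor
  · rw [hpre y, hpre y₀]; linarith
  · rw [hpre y, hpre y₀]; linarith
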